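/- The tracial geometric mean is subadditive in its first argument: for positive semidefinite ℓ×ℓ complex matrices X₁,…,Xₙ and Y, tgm(Σⱼ Xⱼ, Y) ≤ Σⱼ tgm(Xⱼ, Y). -/

import Mathlib

open Matrix
open scoped ComplexOrder

namespace Matrix.PosSemidef

/-- The positive semidefinite square root of a positive semidefinite matrix
(the definition removed from Mathlib, restored verbatim). -/
noncomputable def sqrt {n 𝕜 : Type*} [Fintype n] [DecidableEq n] [RCLike 𝕜]
    {A : Matrix n n 𝕜} (hA : PosSemidef A) : Matrix n n 𝕜 :=
  hA.1.eigenvectorUnitary.1 * diagonal ((↑) ∘ (√·) ∘ hA.1.eigenvalues) *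
  (star hA.1.eigenvectorUnitary : Matrix n n 𝕜)

lemma posSemidef_sqrt {n 𝕜 : Type*} [Fintype n] [DecidableEq n] [RCLike 𝕜]
    {A : Matrix n n 𝕜} (hA : PosSemidef A) : PosSemidef hA.sqrt := by
  apply PosSemidef.mul_mul_conjTranspose_same
  refine posSemidef_diagonal_iff.mpr fun i ↦ ?_
  rw [Function.comp_apply, RCLike.nonneg_iff]
  constructor
  · simp only [RCLike.ofReal_re]
    exact Real.sqrt_nonneg _
  · simp only [RCLike.ofReal_im]

end Matrix.PosSemidef

namespace TgmAux

variable {n : Type*} [Fintype n] [DecidableEq n]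

noncomputable def cfcM {A : Matrix n n ℂ} (hA : A.PosSemidef) (f : ℝ → ℝ) : Matrix n n ℂ :=
  hA.1.eigenvectorUnitary.1 * diagonal (Complex.ofReal ∘ f ∘ hA.1.eigenvalues) *
    (star hA.1.eigenvectorUnitary : Matrix n n ℂ)

lemma cfcM_sqrt {A : Matrix n n ℂ} (hA : A.PosSemidef) : cfcM hA Real.sqrt = hA.sqrt := rfl

lemma cfcM_mul {A : Matrix n n ℂ} (hA : A.PosSemidef) (f g h : ℝ → ℝ)
    (hfg : ∀ i, f (hA.1.eigenvalues i) * g (hA.1.eigenvalues i) = h (hA.1.eigenvalues i)) :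
    cfcM hA f * cfcM hA g = cfcM hA h := by
  unfold cfcM
  have hU : (star hA.1.eigenvectorUnitary : Matrix n n ℂ) * hA.1.eigenvectorUnitary.1 = 1 :=
    mem_unitaryGroup_iff'.mp hA.1.eigenvectorUnitary.2
  have key : hA.1.eigenvectorUnitary.1 * ((diagonal (Complex.ofReal ∘ f ∘ hA.1.eigenvalues) *
        ((star hA.1.eigenvectorUnitary : Matrix n n ℂ) * hA.1.eigenvectorUnitary.1)) *
        diagonal (Complex.ofReal ∘ g ∘ hA.1.eigenvalues)) *
        (star hA.1.eigenvectorUnitary : Matrix n n ℂ)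
      = hA.1.eigenvectorUnitary.1 * diagonal (Complex.ofReal ∘ f ∘ hA.1.eigenvalues) *
        (star hA.1.eigenvectorUnitary : Matrix n n ℂ) *
        (hA.1.eigenvectorUnitary.1 * diagonal (Complex.ofReal ∘ g ∘ hA.1.eigenvalues) *
        (star hA.1.eigenvectorUnitary : Matrix n n ℂ)) := by
    simp only [mul_assoc]
  rw [← key, hU, mul_one, diagonal_mul_diagonal]
  have : (fun i => (Complex.ofReal ∘ f ∘ hA.1.eigenvalues) i
      * (Complex.ofReal ∘ g ∘ hA.1.eigenvalues) i)
      = Complex.ofReal ∘ h ∘ hA.1.eigenvalues :=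
    funext fun i => by simp [← Complex.ofReal_mul, hfg i]
  rw [this]

lemma cfcM_congr {A : Matrix n n ℂ} (hA : A.PosSemidef) {f g : ℝ → ℝ}
    (hfg : ∀ i, f (hA.1.eigenvalues i) = g (hA.1.eigenvalues i)) :
    cfcM hA f = cfcM hA g := by
  have : Complex.ofReal ∘ f ∘ hA.1.eigenvalues = Complex.ofReal ∘ g ∘ hA.1.eigenvalues :=
    funext fun i => by simp [hfg i]
  unfold cfcM
  rw [this]

lemma cfcM_id {A : Matrix n n ℂ} (hA : A.PosSemidef) : cfcM hA id = A :=
  hA.1.spectral_theorem.symm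

lemma cfcM_one {A : Matrix n n ℂ} (hA : A.PosSemidef) : cfcM hA (fun _ => 1) = 1 := by
  unfold cfcM
  have : diagonal (Complex.ofReal ∘ (fun _ : ℝ => (1:ℝ)) ∘ hA.1.eigenvalues) = (1 : Matrix n n ℂ) := by
    simp [Function.comp_def]
  rw [this, mul_one, mem_unitaryGroup_iff.mp hA.1.eigenvectorUnitary.2]

lemma cfcM_sub {A : Matrix n n ℂ} (hA : A.PosSemidef) (f g : ℝ → ℝ) :
    cfcM hA (fun t => f t - g t) = cfcM hA f - cfcM hA g := by
  unfold cfcM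
  have : (Complex.ofReal ∘ (fun t => f t - g t) ∘ hA.1.eigenvalues)
      = fun i => (Complex.ofReal ∘ f ∘ hA.1.eigenvalues) i
        - (Complex.ofReal ∘ g ∘ hA.1.eigenvalues) i := funext fun i => by simp
  rw [this, ← diagonal_sub, Matrix.mul_sub, Matrix.sub_mul]

lemma cfcM_zero {A : Matrix n n ℂ} (hA : A.PosSemidef) : cfcM hA (fun _ => 0) = 0 := by
  unfold cfcM
  have : diagonal (Complex.ofReal ∘ (fun _ : ℝ => (0:ℝ)) ∘ hA.1.eigenvalues) = (0 : Matrix n n ℂ) := by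
    simp [Function.comp_def]
  rw [this, mul_zero, zero_mul]

lemma cfcM_posSemidef {A : Matrix n n ℂ} (hA : A.PosSemidef) {f : ℝ → ℝ}
    (hf : ∀ i, 0 ≤ f (hA.1.eigenvalues i)) : (cfcM hA f).PosSemidef := by
  have hd : (diagonal (Complex.ofReal ∘ f ∘ hA.1.eigenvalues)).PosSemidef :=
    posSemidef_diagonal_iff.mpr fun i => by
      simpa using Complex.zero_le_real.mpr (hf i)
  have h := hd.mul_mul_conjTranspose_same (hA.1.eigenvectorUnitary.1)
  simpa [cfcM, Matrix.star_eq_conjTranspose] using h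

lemma _root_.Matrix.PosSemidef.sqrt_mul_self {A : Matrix n n ℂ} (hA : A.PosSemidef) :
    hA.sqrt * hA.sqrt = A := by
  rw [← cfcM_sqrt, cfcM_mul hA Real.sqrt Real.sqrt id fun i => Real.mul_self_sqrt
    (hA.eigenvalues_nonneg i), cfcM_id]

lemma _root_.Matrix.PosSemidef.eq_sqrt_of_sq_eq {A B : Matrix n n ℂ} (hB : B.PosSemidef)
    (hA : A.PosSemidef) (h : B ^ 2 = A) : B = hA.sqrt := by
  open scoped MatrixOrder Matrix.Norms.L2Operator in
  exact (CFC.mul_self_eq_mul_self_iff B hA.sqrt hB.nonneg hA.posSemidef_sqrt.nonneg).mp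
    (by rw [hA.sqrt_mul_self, ← h, pow_two])

lemma cfcM_trace {A : Matrix n n ℂ} (hA : A.PosSemidef) (f : ℝ → ℝ) :
    (cfcM hA f).trace = ∑ i, (f (hA.1.eigenvalues i) : ℂ) := by
  unfold cfcM
  rw [trace_mul_cycle, mem_unitaryGroup_iff'.mp hA.1.eigenvectorUnitary.2, one_mul,
    trace_diagonal]
  simp

local notation "⟪" x ", " y "⟫" => @inner ℂ _ _ x y

lemma dot_cs (u v : n → ℂ) :
    (dotProduct (star u) v).re ≤
      Real.sqrt (dotProduct (star u) u).re * Real.sqrt (dotProduct (star v) v).re := by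
  have h := norm_inner_le_norm (𝕜 := ℂ)
    ((WithLp.equiv 2 (n → ℂ)).symm u) ((WithLp.equiv 2 (n → ℂ)).symm v)
  rw [EuclideanSpace.inner_eq_star_dotProduct, dotProduct_comm] at h
  have hu : ‖(WithLp.equiv 2 (n → ℂ)).symm u‖ = Real.sqrt (dotProduct (star u) u).re := by
    rw [norm_eq_sqrt_re_inner (𝕜 := ℂ), EuclideanSpace.inner_eq_star_dotProduct, dotProduct_comm]
    rfl
  have hv : ‖(WithLp.equiv 2 (n → ℂ)).symm v‖ = Real.sqrt (dotProduct (star v) v).re := by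
    rw [norm_eq_sqrt_re_inner (𝕜 := ℂ), EuclideanSpace.inner_eq_star_dotProduct, dotProduct_comm]
    rfl
  rw [hu, hv] at h
  exact (RCLike.re_le_norm _).trans h

lemma trace_re_nonneg {A : Matrix n n ℂ} (hA : A.PosSemidef) : 0 ≤ A.trace.re := by
  rw [Matrix.trace]
  rw [Complex.re_sum]
  refine Finset.sum_nonneg fun i _ => ?_
  have := hA.re_dotProduct_nonneg (Pi.single i 1)
  have hs : star (Pi.single i (1:ℂ)) = (Pi.single i 1 : n → ℂ) := by
    funext j; by_cases hji : j = i <;> simp [Pi.single_apply, hji]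
  have e : dotProduct (star (Pi.single i 1)) (A *ᵥ Pi.single i 1) = A i i := by
    rw [mulVec_single_one, hs, single_dotProduct, one_mul]
    rfl
  rw [e] at this
  simpa [Matrix.diag] using this

lemma trace_cs (X Y : Matrix n n ℂ) :
    ((Xᴴ * Y).trace).re ≤
      Real.sqrt ((Xᴴ * X).trace).re * Real.sqrt ((Yᴴ * Y).trace).re := by
  have key : ∀ P Q : Matrix n n ℂ, (Pᴴ * Q).trace
      = dotProduct (star (fun p : n × n => P p.1 p.2)) (fun p : n × n => Q p.1 p.2) := by
    intro P Q
    simp only [Matrix.trace, Matrix.diag, Matrix.mul_apply, conjTranspose_apply, dotProduct,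
      Pi.star_apply, Fintype.sum_prod_type, RCLike.star_def]
    exact Finset.sum_comm
  rw [key, key, key]
  exact dot_cs _ _

lemma hermitian_psd_of_re {N : Matrix n n ℂ} (hN : N.IsHermitian)
    (h : ∀ x : n → ℂ, 0 ≤ (dotProduct (star x) (N *ᵥ x)).re) : N.PosSemidef := by
  refine Matrix.PosSemidef.of_dotProduct_mulVec_nonneg hN fun x => ?_
  have him : star (dotProduct (star x) (N *ᵥ x)) = dotProduct (star x) (N *ᵥ x) := by
    rw [← star_dotProduct, star_mulVec, hN.eq, ← dotProduct_mulVec]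
  rw [Complex.le_def]
  constructor
  · simpa using h x
  · have := congrArg Complex.im him
    simp only [Complex.star_def, Complex.conj_im] at this
    simpa [eq_comm] using (by linarith [this] : (dotProduct (star x) (N *ᵥ x)).im = 0)

lemma flip {M : Matrix n n ℂ} (h : (1 - M * Mᴴ).PosSemidef) : (1 - Mᴴ * M).PosSemidef := by
  have hcontr : ∀ y : n → ℂ, (dotProduct (star (Mᴴ *ᵥ y)) (Mᴴ *ᵥ y)).re
      ≤ (dotProduct (star y) y).re := by
    intro y
    have h0 := h.re_dotProduct_nonneg y
    have e1 : dotProduct (star y) ((1 - M * Mᴴ) *ᵥ y)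
        = dotProduct (star y) y - dotProduct (star (Mᴴ *ᵥ y)) (Mᴴ *ᵥ y) := by
      rw [sub_mulVec, dotProduct_sub, one_mulVec]
      congr 1
      rw [← mulVec_mulVec, dotProduct_mulVec (star y), star_mulVec,
        conjTranspose_conjTranspose]
    rw [e1] at h0
    simp only [Complex.sub_re, RCLike.re_to_complex] at h0 ⊢
    linarith
  refine hermitian_psd_of_re ?_ ?_
  · exact isHermitian_one.sub (isHermitian_conjTranspose_mul_self M)
  intro x
  set b := (dotProduct (star (M *ᵥ x)) (M *ᵥ x)).re with hb
  have e2 : dotProduct (star x) ((1 - Mᴴ * M) *ᵥ x)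
      = dotProduct (star x) x - dotProduct (star (M *ᵥ x)) (M *ᵥ x) := by
    rw [sub_mulVec, dotProduct_sub, one_mulVec]
    congr 1
    rw [← mulVec_mulVec, dotProduct_mulVec (star x), star_mulVec]
  rw [e2]
  have hbnn : 0 ≤ b := by
    have := dotProduct_star_self_nonneg (M *ᵥ x)
    exact (Complex.le_def.mp this).1
  have hxnn : 0 ≤ (dotProduct (star x) x).re := by
    have := dotProduct_star_self_nonneg x
    exact (Complex.le_def.mp this).1
  have key : b ≤ (dotProduct (star x) x).re := by
    have e3 : dotProduct (star (M *ᵥ x)) (M *ᵥ x)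
        = dotProduct (star x) (Mᴴ *ᵥ (M *ᵥ x)) := by
      rw [dotProduct_mulVec (star x), ← star_mulVec]

    have hcs := dot_cs x (Mᴴ *ᵥ (M *ᵥ x))
    rw [← e3] at hcs
    have h4 : Real.sqrt ((dotProduct (star (Mᴴ *ᵥ (M *ᵥ x))) (Mᴴ *ᵥ (M *ᵥ x))).re)
        ≤ Real.sqrt b := Real.sqrt_le_sqrt (hcontr (M *ᵥ x))
    have h5 : b ≤ Real.sqrt ((dotProduct (star x) x).re) * Real.sqrt b := by
      calc b ≤ _ := hcs
        _ ≤ _ := by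
          apply mul_le_mul_of_nonneg_left h4 (Real.sqrt_nonneg _)
    rcases eq_or_lt_of_le hbnn with h6 | h6
    · rw [← h6]; exact hxnn
    · have h7 : Real.sqrt b ≤ Real.sqrt ((dotProduct (star x) x).re) := by
        have hb5 : Real.sqrt b * Real.sqrt b
            ≤ Real.sqrt ((dotProduct (star x) x).re) * Real.sqrt b := by
          rw [Real.mul_self_sqrt hbnn]; exact h5
        exact le_of_mul_le_mul_right hb5 (Real.sqrt_pos.mpr h6)
      calc b = Real.sqrt b * Real.sqrt b := (Real.mul_self_sqrt hbnn).symm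
        _ ≤ Real.sqrt ((dotProduct (star x) x).re) * Real.sqrt ((dotProduct (star x) x).re) :=
            mul_le_mul h7 h7 (Real.sqrt_nonneg _) (Real.sqrt_nonneg _)
        _ = _ := Real.mul_self_sqrt hxnn
  simp only [Complex.sub_re]
  linarith


/-- pseudo-inverse of the square root, scalar version -/
noncomputable def pinv (t : ℝ) : ℝ := if t = 0 then 0 else (Real.sqrt t)⁻¹

/-- support indicator, scalar version -/
noncomputable def supp (t : ℝ) : ℝ := if t = 0 then 0 else 1

lemma pinv_nonneg' (t : ℝ) : 0 ≤ pinv t := by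
  unfold pinv; split <;> positivity

lemma one_sub_supp_nonneg (t : ℝ) : 0 ≤ 1 - supp t := by
  unfold supp; split <;> norm_num

lemma mul_pinv {t : ℝ} (ht : 0 ≤ t) : t * pinv t = Real.sqrt t := by
  unfold pinv
  rcases eq_or_lt_of_le ht with h | h
  · simp [← h]
  · rw [if_neg (ne_of_gt h)]
    have hs : Real.sqrt t ≠ 0 := by positivity
    field_simp
    exact (Real.sq_sqrt ht).symm

lemma pinv_mul_mul_pinv {t : ℝ} (ht : 0 ≤ t) : pinv t * t * pinv t = supp t := by
  rw [mul_comm (pinv t) t, mul_pinv ht]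
  unfold pinv supp
  rcases eq_or_lt_of_le ht with h | h
  · simp [← h]
  · rw [if_neg (ne_of_gt h), if_neg (ne_of_gt h)]
    have hs : Real.sqrt t ≠ 0 := by positivity
    field_simp

lemma one_sub_supp_mul_self (t : ℝ) : (1 - supp t) * t * (1 - supp t) = 0 := by
  unfold supp
  by_cases h : t = 0 <;> simp [h]

lemma sqrt_congr {A B : Matrix n n ℂ} (h : A = B) (hA : A.PosSemidef) (hB : B.PosSemidef) :
    hA.sqrt = hB.sqrt := by subst h; rfl

/-- `C * pinv(C) = √C` -/
lemma mul_cfcM_pinv {C : Matrix n n ℂ} (hC : C.PosSemidef) :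
    C * cfcM hC pinv = hC.sqrt := by
  have h := cfcM_mul hC id pinv Real.sqrt fun i => mul_pinv (hC.eigenvalues_nonneg i)
  rw [cfcM_id] at h
  rw [← cfcM_sqrt hC, ← h]

/-- Key inequality: if `0 ≤ A ≤ C` then `re tr(A · pinv √C) ≤ re tr √A`. -/
lemma core_ineq {A C : Matrix n n ℂ} (hA : A.PosSemidef) (hC : C.PosSemidef)
    (hsub : (C - A).PosSemidef) :
    ((A * cfcM hC pinv).trace).re ≤ (hA.sqrt.trace).re := by
  set D := cfcM hC pinv with hDdef
  have hD : D.PosSemidef := cfcM_posSemidef hC fun i => pinv_nonneg' _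
  have hDh : Dᴴ = D := hD.1.eq
  set R := hA.sqrt with hRdef
  have hR : R.PosSemidef := hA.posSemidef_sqrt
  have hRh : Rᴴ = R := hR.1.eq
  have hRR : R * R = A := hA.sqrt_mul_self
  set Q := hR.sqrt with hQdef
  have hQ : Q.PosSemidef := hR.posSemidef_sqrt
  have hQh : Qᴴ = Q := hQ.1.eq
  have hQQ : Q * Q = R := hR.sqrt_mul_self
  set W := Q * R * D with hWdef
  -- step 1 : A * D = Qᴴ * W
  have e1 : A * D = Qᴴ * W := by
    rw [hQh, hWdef, show Q * (Q * R * D) = ((Q * Q) * R) * D by simp only [mul_assoc], hQQ,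
      hRR]
  -- the contraction
  set M' := D * R with hM'def
  have hM'h : M'ᴴ = R * D := by rw [hM'def, conjTranspose_mul, hDh, hRh]
  have hMM : (1 - M' * M'ᴴ).PosSemidef := by
    have hDAD : M' * M'ᴴ = D * A * D := by
      rw [hM'def, hM'h, show D * R * (R * D) = D * (R * R) * D by simp only [mul_assoc], hRR]
    have hDCD : D * C * D = cfcM hC supp := by
      have h1 := cfcM_mul hC pinv id (fun t => pinv t * t) fun i => rfl
      rw [cfcM_id, ← hDdef] at h1
      have h2 := cfcM_mul hC (fun t => pinv t * t) pinv supp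
        fun i => pinv_mul_mul_pinv (hC.eigenvalues_nonneg i)
      rw [← hDdef] at h2
      rw [h1, h2]
    have hsupp : (1 - D * C * D).PosSemidef := by
      rw [hDCD, show (1 : Matrix n n ℂ) - cfcM hC supp
        = cfcM hC (fun t => 1 - supp t) by rw [cfcM_sub, cfcM_one]]
      exact cfcM_posSemidef hC fun i => one_sub_supp_nonneg _
    have hmid : (D * (C - A) * D).PosSemidef := by
      have := hsub.conjTranspose_mul_mul_same (B := D)
      rwa [hDh] at this
    have hsum : (1 : Matrix n n ℂ) - M' * M'ᴴ = (1 - D * C * D) + D * (C - A) * D := by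
      rw [hDAD, Matrix.mul_sub, Matrix.sub_mul]
      abel
    rw [hsum]
    exact hsupp.add hmid
  have hflip : (1 - M'ᴴ * M').PosSemidef := flip hMM
  -- step 2 : re tr(Wᴴ * W) ≤ re tr R
  have hWW : (Wᴴ * W).trace = (Q * (M'ᴴ * M') * Q).trace := by
    have hWH : Wᴴ = D * R * Q := by
      rw [hWdef, conjTranspose_mul, conjTranspose_mul, hDh, hRh, hQh]
      simp only [mul_assoc]
    have e2 : Wᴴ * W = (M' * Q) * (Q * M'ᴴ) := by
      rw [hWH, hWdef, hM'def, hM'h]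
      simp only [mul_assoc]
    rw [e2, trace_mul_comm, show Q * M'ᴴ * (M' * Q) = Q * (M'ᴴ * M') * Q by
      simp only [mul_assoc]]
  have htrR : 0 ≤ R.trace.re := trace_re_nonneg hR
  have hWWle : ((Wᴴ * W).trace).re ≤ R.trace.re := by
    rw [hWW]
    have hdiff : Q * (M'ᴴ * M') * Q = Q * Q - Q * (1 - M'ᴴ * M') * Qᴴ := by
      rw [hQh, Matrix.mul_sub, Matrix.sub_mul, Matrix.mul_one]
      abel
    have hple : 0 ≤ ((Q * (1 - M'ᴴ * M') * Qᴴ).trace).re :=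
      trace_re_nonneg (hflip.mul_mul_conjTranspose_same Q)
    rw [hdiff, hQQ]
    have : (R - Q * (1 - M'ᴴ * M') * Qᴴ).trace = R.trace - (Q * (1 - M'ᴴ * M') * Qᴴ).trace :=
      trace_sub _ _
    rw [this, Complex.sub_re]
    linarith
  -- step 3 : Cauchy-Schwarz
  have hcs := trace_cs Q W
  rw [← e1] at hcs
  rw [hQh] at hcs
  rw [hQQ] at hcs
  calc ((A * D).trace).re ≤ Real.sqrt R.trace.re * Real.sqrt ((Wᴴ * W).trace).re := hcs
    _ ≤ Real.sqrt R.trace.re * Real.sqrt R.trace.re :=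
        mul_le_mul_of_nonneg_left (Real.sqrt_le_sqrt hWWle) (Real.sqrt_nonneg _)
    _ = R.trace.re := Real.mul_self_sqrt htrR

/-- The traces of `√(NᴴN)` and `√(NNᴴ)` agree. -/
lemma trace_sqrt_comm (N : Matrix n n ℂ) :
    (Matrix.posSemidef_conjTranspose_mul_self N).sqrt.trace
      = (Matrix.posSemidef_self_mul_conjTranspose N).sqrt.trace := by
  set h1 := Matrix.posSemidef_conjTranspose_mul_self N
  set h2 := Matrix.posSemidef_self_mul_conjTranspose N
  set E := cfcM h1 pinv with hEdef
  have hE : E.PosSemidef := cfcM_posSemidef h1 fun i => pinv_nonneg' _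
  set K := cfcM h1 (fun t => 1 - supp t) with hKdef
  have hK : K.PosSemidef := cfcM_posSemidef h1 fun i => one_sub_supp_nonneg _
  have hKh : Kᴴ = K := hK.1.eq
  -- N * K = 0
  have hNK : N * K = 0 := by
    rw [← Matrix.conjTranspose_mul_self_eq_zero (A := N * K)]
    have e : (N * K)ᴴ * (N * K) = K * (Nᴴ * N) * K := by
      rw [conjTranspose_mul, hKh]
      simp only [mul_assoc]
    have e2 := cfcM_mul h1 (fun t => 1 - supp t) id (fun t => (1 - supp t) * t) fun i => rfl
    rw [cfcM_id, ← hKdef] at e2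
    have e3 : cfcM h1 (fun t => (1 - supp t) * t) * K
        = cfcM h1 (fun t => (1 - supp t) * t * (1 - supp t)) := by
      rw [hKdef]
      exact cfcM_mul h1 _ _ _ fun i => rfl
    rw [e, e2, e3, cfcM_congr h1 (g := fun _ => 0) fun i => one_sub_supp_mul_self _, cfcM_zero]
  -- (N E Nᴴ)² = N Nᴴ
  have hEME : E * (Nᴴ * N) * E = cfcM h1 supp := by
    have e2 := cfcM_mul h1 pinv id (fun t => pinv t * t) fun i => rfl
    rw [cfcM_id, ← hEdef] at e2
    have e3 := cfcM_mul h1 (fun t => pinv t * t) pinv supp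
      fun i => pinv_mul_mul_pinv (h1.eigenvalues_nonneg i)
    rw [← hEdef] at e3
    rw [e2, e3]
  have hsuppK : cfcM h1 supp = 1 - K := by
    have e4 : K = 1 - cfcM h1 supp := by
      rw [hKdef, ← cfcM_one h1, ← cfcM_sub h1]
    rw [e4]
    abel
  have hsq : (N * E * Nᴴ) ^ 2 = N * Nᴴ := by
    have e5 : N * E * Nᴴ * (N * E * Nᴴ) = N * (E * (Nᴴ * N) * E) * Nᴴ := by
      simp only [mul_assoc]
    rw [pow_two, e5, hEME, hsuppK, Matrix.mul_sub, Matrix.mul_one, Matrix.sub_mul, hNK,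
      Matrix.zero_mul, sub_zero]
  have hpsd : (N * E * Nᴴ).PosSemidef := hE.mul_mul_conjTranspose_same N
  have heq : N * E * Nᴴ = h2.sqrt := hpsd.eq_sqrt_of_sq_eq h2 hsq
  have hh1 : Nᴴ * N * E = h1.sqrt := by
    have h := cfcM_mul h1 id pinv Real.sqrt fun i => mul_pinv (h1.eigenvalues_nonneg i)
    rw [cfcM_id, ← hEdef] at h
    rw [h, cfcM_sqrt]
  calc h1.sqrt.trace = (Nᴴ * N * E).trace := by rw [hh1]
    _ = (N * E * Nᴴ).trace := (trace_mul_cycle N E Nᴴ).symm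
    _ = h2.sqrt.trace := by rw [heq]


lemma posSemidef_sum_finset {ι : Type*} (s : Finset ι) (f : ι → Matrix n n ℂ)
    (h : ∀ i ∈ s, (f i).PosSemidef) : (∑ i ∈ s, f i).PosSemidef :=
  Finset.sum_induction f _ (fun _ _ ha hb => ha.add hb) .zero h

end TgmAux

open TgmAux

/-- The product `√X * Y * √X` is positive semidefinite. -/
theorem sqrt_mul_mul_sqrt_posSemidef {n : Type*} [Fintype n] [DecidableEq n]
    {X Y : Matrix n n ℂ} (hX : X.PosSemidef) (hY : Y.PosSemidef) :
    (hX.sqrt * Y * hX.sqrt).PosSemidef := by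
  have h := hY.conjTranspose_mul_mul_same (B := hX.sqrt)
  rwa [hX.posSemidef_sqrt.isHermitian.eq] at h

/-- The tracial geometric mean `tgm(X,Y) = trace √(√X·Y·√X)`. -/
noncomputable def tgm {n : Type*} [Fintype n] [DecidableEq n]
    {X Y : Matrix n n ℂ} (hX : X.PosSemidef) (hY : Y.PosSemidef) : ℝ :=
  ((sqrt_mul_mul_sqrt_posSemidef hX hY).sqrt.trace).re

namespace TgmAux

lemma tgm_eq_swap {n : Type*} [Fintype n] [DecidableEq n]
    {X Y : Matrix n n ℂ} (hX : X.PosSemidef) (hY : Y.PosSemidef)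
    {C : Matrix n n ℂ} (hC : C.PosSemidef) (hCeq : hY.sqrt * X * hY.sqrt = C) :
    tgm hX hY = (hC.sqrt.trace).re := by
  set N := hY.sqrt * hX.sqrt with hNdef
  have hN1 : hX.sqrt * Y * hX.sqrt = Nᴴ * N := by
    rw [hNdef, conjTranspose_mul, hX.posSemidef_sqrt.1.eq, hY.posSemidef_sqrt.1.eq]
    have e : hX.sqrt * hY.sqrt * (hY.sqrt * hX.sqrt)
        = hX.sqrt * (hY.sqrt * hY.sqrt) * hX.sqrt := by simp only [mul_assoc]
    rw [e, hY.sqrt_mul_self]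
  have hN2 : N * Nᴴ = C := by
    rw [hNdef, conjTranspose_mul, hX.posSemidef_sqrt.1.eq, hY.posSemidef_sqrt.1.eq]
    have e : hY.sqrt * hX.sqrt * (hX.sqrt * hY.sqrt)
        = hY.sqrt * (hX.sqrt * hX.sqrt) * hY.sqrt := by simp only [mul_assoc]
    rw [e, hX.sqrt_mul_self, hCeq]
  have e1 : (sqrt_mul_mul_sqrt_posSemidef hX hY).sqrt
      = (Matrix.posSemidef_conjTranspose_mul_self N).sqrt :=
    sqrt_congr hN1 _ _
  have e2 : (Matrix.posSemidef_self_mul_conjTranspose N).sqrt = hC.sqrt :=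
    sqrt_congr hN2 _ _
  unfold tgm
  rw [e1, trace_sqrt_comm, e2]

end TgmAux

/-- A finite sum of positive semidefinite matrices is positive semidefinite. -/
theorem posSemidef_sum {n ℓ : ℕ} (X : Fin n → Matrix (Fin ℓ) (Fin ℓ) ℂ)
    (h : ∀ j, (X j).PosSemidef) : (∑ j, X j).PosSemidef :=
  Finset.sum_induction X Matrix.PosSemidef (fun _ _ ha hb => ha.add hb)
    Matrix.PosSemidef.zero (fun i _ => h i)

/-- Subadditivity of the tracial geometric mean in its first argument:
`tgm(Σⱼ Xⱼ, Y) ≤ Σⱼ tgm(Xⱼ, Y)`. -/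
theorem tgm_sum_left_le {n ℓ : ℕ} {X : Fin n → Matrix (Fin ℓ) (Fin ℓ) ℂ}
    {Y : Matrix (Fin ℓ) (Fin ℓ) ℂ}
    (hX : ∀ j, (X j).PosSemidef) (hY : Y.PosSemidef) :
    tgm (posSemidef_sum X hX) hY ≤ ∑ j, tgm (hX j) hY := by
  classical
  set Aj : Fin n → Matrix (Fin ℓ) (Fin ℓ) ℂ := fun j => hY.sqrt * X j * hY.sqrt with hAjdef
  have hAj : ∀ j, (Aj j).PosSemidef := fun j => by
    have h := (hX j).conjTranspose_mul_mul_same (B := hY.sqrt)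
    rwa [hY.posSemidef_sqrt.isHermitian.eq] at h
  have hC : (∑ j, Aj j).PosSemidef := posSemidef_sum_finset _ _ fun j _ => hAj j
  have hCsum : hY.sqrt * (∑ j, X j) * hY.sqrt = ∑ j, Aj j := by
    rw [Finset.mul_sum, Finset.sum_mul]
  rw [tgm_eq_swap (posSemidef_sum X hX) hY hC hCsum]
  have hstep : ∀ j, tgm (hX j) hY = (((hAj j).sqrt).trace).re :=
    fun j => tgm_eq_swap (hX j) hY (hAj j) rfl
  calc (hC.sqrt.trace).re = (((∑ j, Aj j) * cfcM hC pinv).trace).re := by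
        rw [mul_cfcM_pinv]
    _ = ∑ j, ((Aj j * cfcM hC pinv).trace).re := by
        rw [Finset.sum_mul, trace_sum, Complex.re_sum]
    _ ≤ ∑ j, (((hAj j).sqrt).trace).re := by
        refine Finset.sum_le_sum fun j _ => ?_
        refine core_ineq (hAj j) hC ?_
        have e : (∑ k, Aj k) - Aj j = ∑ k ∈ Finset.univ.erase j, Aj k := by
          rw [sub_eq_iff_eq_add]
          exact (Finset.sum_erase_add _ _ (Finset.mem_univ j)).symm
        rw [e]
        exact posSemidef_sum_finset _ _ fun k _ => hAj k
    _ = ∑ j, tgm (hX j) hY := Finset.sum_congr rfl fun j _ => (hstep j).symm
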